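/- Let A ∈ ℝ^{n×n} be symmetric positive semidefinite with eigenvalues 0 ≤ λ₁ ≤ … ≤ λ_n, let ε ≥ 0, and let k be the largest integer such that λ₁ + … + λ_k ≤ kε. If v₁,…,v_m ∈ ℝ^n are orthonormal vectors with v_i A v_iᵀ ≤ ε for all i = 1,…,m, then m ≤ k. -/

import Mathlib

open Matrix BigOperators

lemma rearrange_aux (n m : ℕ) (hmn : m ≤ n) (lam : Fin n → ℝ) (hmono : Monotone lam)
    (c : Fin n → ℝ) (hc0 : ∀ j, 0 ≤ c j) (hc1 : ∀ j, c j ≤ 1)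
    (hcs : ∑ j, c j = (m : ℝ)) :
    (∑ j ∈ Finset.univ.filter (fun j : Fin n => (j : ℕ) < m), lam j) ≤ ∑ j, lam j * c j := by
  classical
  rcases Nat.eq_zero_or_pos n with hn | hn
  · subst hn
    interval_cases m
    simp
  set b : Fin n → ℝ := fun j => if (j : ℕ) < m then 1 else 0 with hb
  have hbs : ∑ j, b j = (m : ℝ) := by
    have hcard : (Finset.univ.filter (fun j : Fin n => (j : ℕ) < m)).card = m := by
      have : Finset.univ.filter (fun j : Fin n => (j : ℕ) < m)
          = Finset.map (Fin.castLEEmb hmn) Finset.univ := by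
        ext j
        simp only [Finset.mem_filter, Finset.mem_univ, true_and, Finset.mem_map]
        constructor
        · intro hj
          exact ⟨⟨(j : ℕ), hj⟩, by simp [Fin.castLEEmb, Fin.ext_iff]⟩
        · rintro ⟨i, rfl⟩
          simpa using i.isLt
        
      simp [this]
    simp [hb, Finset.sum_ite_eq, Finset.sum_boole, hcard]
  have hfilter : (∑ j ∈ Finset.univ.filter (fun j : Fin n => (j : ℕ) < m), lam j)
      = ∑ j, lam j * b j := by
    rw [Finset.sum_filter]
    refine Finset.sum_congr rfl fun j _ => ?_
    by_cases h : (j : ℕ) < m <;> simp [hb, h]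
  set idx : Fin n := ⟨min m (n - 1), by omega⟩ with hidx
  set t : ℝ := lam idx with ht
  have key : ∀ j : Fin n, 0 ≤ (lam j - t) * (c j - b j) := by
    intro j
    by_cases h : (j : ℕ) < m
    · have hlt : lam j ≤ t := by
        apply hmono
        show (j : ℕ) ≤ min m (n - 1)
        have := j.isLt
        omega
      have hbj : b j = 1 := by simp [hb, h]
      rw [hbj]
      nlinarith [hc1 j]
    · have hlt : t ≤ lam j := by
        apply hmono
        show min m (n - 1) ≤ (j : ℕ)
        omega
      have hbj : b j = 0 := by simp [hb, h]
      rw [hbj]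
      exact mul_nonneg (by linarith) (by linarith [hc0 j])
  have h0 : (0 : ℝ) ≤ ∑ j, (lam j - t) * (c j - b j) :=
    Finset.sum_nonneg fun j _ => key j
  have expand : ∑ j, (lam j - t) * (c j - b j)
      = (∑ j, lam j * c j) - (∑ j, lam j * b j)
        - (t * (∑ j, c j) - t * (∑ j, b j)) := by
    rw [Finset.mul_sum, Finset.mul_sum, ← Finset.sum_sub_distrib, ← Finset.sum_sub_distrib,
      ← Finset.sum_sub_distrib]
    exact Finset.sum_congr rfl fun j _ => by ring
  rw [expand, hcs, hbs] at h0
  rw [hfilter]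
  linarith

/-- Lemma B.2: let `A` be symmetric PSD with eigenvalues
`λ₁ ≤ … ≤ λ_n` (witnessed by an orthogonal diagonalization), `ε ≥ 0`, and `k`
the largest integer with `λ₁ + … + λ_k ≤ k ε`.  If `v₁,…,v_m` are orthonormal
with `vᵢ A vᵢᵀ ≤ ε` for each `i`, then `m ≤ k`. -/
theorem orthonormal_small_quadform_count_bound (n m k : ℕ)
    (A : Matrix (Fin n) (Fin n) ℝ) (hA : A.PosSemidef)
    (lam : Fin n → ℝ) (hlam_mono : Monotone lam)
    (hdiag : ∃ U : Matrix (Fin n) (Fin n) ℝ,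
      Uᵀ * U = 1 ∧ A = U * Matrix.diagonal lam * Uᵀ)
    (ε : ℝ) (hε : 0 ≤ ε)
    (hk : (∑ i ∈ Finset.univ.filter (fun i : Fin n => (i : ℕ) < k), lam i)
            ≤ (k : ℝ) * ε)
    (hk_max : ∀ k' : ℕ, k' ≤ n →
      (∑ i ∈ Finset.univ.filter (fun i : Fin n => (i : ℕ) < k'), lam i)
          ≤ (k' : ℝ) * ε → k' ≤ k)
    (v : Fin m → (Fin n → ℝ))
    (hortho : ∀ i j : Fin m, v i ⬝ᵥ v j = if i = j then 1 else 0)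
    (hsmall : ∀ i : Fin m, v i ⬝ᵥ (A *ᵥ v i) ≤ ε) :
    m ≤ k := by
  classical
  obtain ⟨U, hU, hAeq⟩ := hdiag
  -- view the vectors in Euclidean space
  set ve : Fin m → EuclideanSpace ℝ (Fin n) :=
    fun i => (WithLp.equiv 2 (Fin n → ℝ)).symm (v i) with hve
  have hon : Orthonormal ℝ ve := by
    rw [orthonormal_iff_ite]
    intro i j
    simpa [hve, PiLp.inner_apply, dotProduct, mul_comm] using hortho i j
  have hm_le_n : m ≤ n := by
    have h1 := hon.linearIndependent.fintype_card_le_finrank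
    simpa using h1
  -- coordinates in the eigenbasis
  set w : Fin m → Fin n → ℝ := fun i => Uᵀ *ᵥ v i with hw
  have hquad : ∀ i, v i ⬝ᵥ (A *ᵥ v i) = ∑ j, lam j * (w i j) ^ 2 := by
    intro i
    rw [hAeq, ← Matrix.mulVec_mulVec, ← Matrix.mulVec_mulVec,
      Matrix.dotProduct_mulVec, ← Matrix.mulVec_transpose]
    simp only [hw, Matrix.mulVec_diagonal, dotProduct]
    exact Finset.sum_congr rfl fun j _ => by ring
  -- the coefficients c j
  set c : Fin n → ℝ := fun j => ∑ i, (w i j) ^ 2 with hc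
  have hc0 : ∀ j, 0 ≤ c j := fun j =>
    Finset.sum_nonneg fun i _ => sq_nonneg _
  -- c j ≤ 1 by Bessel's inequality applied to the j-th column of U
  have hc1 : ∀ j, c j ≤ 1 := by
    intro j
    set u : EuclideanSpace ℝ (Fin n) :=
      (WithLp.equiv 2 (Fin n → ℝ)).symm (fun t => U t j) with hu
    have hbessel := hon.sum_inner_products_le (s := Finset.univ) u
    have hinner : ∀ i, (inner ℝ (ve i) u : ℝ) = w i j := by
      intro i
      simp only [hve, hu, PiLp.inner_apply, RCLike.inner_apply, starRingEnd_apply]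
      simp only [hw, Matrix.mulVec, dotProduct, Matrix.transpose_apply]
      exact Finset.sum_congr rfl fun t _ => rfl
    have hnorm : ‖u‖ ^ 2 = 1 := by
      rw [← real_inner_self_eq_norm_sq]
      have : ((Uᵀ * U) j j : ℝ) = 1 := by rw [hU]; simp [Matrix.one_apply]
      rw [← this]
      simp only [hu, PiLp.inner_apply, RCLike.inner_apply, starRingEnd_apply,
        Matrix.mul_apply, Matrix.transpose_apply]
      rfl
    calc c j = ∑ i, ‖(inner ℝ (ve i) u : ℝ)‖ ^ 2 := by
          refine Finset.sum_congr rfl fun i _ => ?_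
          rw [hinner i]
          rw [Real.norm_eq_abs, sq_abs]
      _ ≤ ‖u‖ ^ 2 := hbessel
      _ = 1 := hnorm
  -- sum of c j equals m
  have hcs : ∑ j, c j = (m : ℝ) := by
    rw [Finset.sum_comm]
    have hrow : ∀ i : Fin m, ∑ j, (w i j) ^ 2 = 1 := by
      intro i
      have hUU : U * Uᵀ = 1 := mul_eq_one_comm.mp hU
      have : (∑ j, (w i j) ^ 2) = w i ⬝ᵥ w i := by
        simp [dotProduct, sq]
      rw [this]
      simp only [hw]
      rw [Matrix.dotProduct_mulVec, ← Matrix.mulVec_transpose, Matrix.transpose_transpose,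
        Matrix.mulVec_mulVec, hUU]
      simpa using hortho i i
    simp [hrow]
  -- main inequality
  have hmain : (∑ j ∈ Finset.univ.filter (fun j : Fin n => (j : ℕ) < m), lam j)
      ≤ (m : ℝ) * ε := by
    calc (∑ j ∈ Finset.univ.filter (fun j : Fin n => (j : ℕ) < m), lam j)
        ≤ ∑ j, lam j * c j := rearrange_aux n m hm_le_n lam hlam_mono c hc0 hc1 hcs
      _ = ∑ i, v i ⬝ᵥ (A *ᵥ v i) := by
          simp only [hquad, hc, Finset.mul_sum]
          rw [Finset.sum_comm]
      _ ≤ ∑ _i : Fin m, ε := Finset.sum_le_sum fun i _ => hsmall i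
      _ = (m : ℝ) * ε := by simp [mul_comm]
  exact hk_max m hm_le_n hmain
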